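/- The map R_{α,β}((x₁,x₂),(y₁,y₂)) = ((y₁ + (α−β)/(x₁+y₂), y₂), (x₁, x₂ − (α−β)/(x₁+y₂))) satisfies the parametric Yang–Baxter equation R²³R¹³R¹² = R¹²R¹³R²³ (wherever defined). -/

import Mathlib

/-- The KdV-lift parametric Yang--Baxter map on ℂ² × ℂ². -/
noncomputable def KdVMap (α β : ℂ) (p : (ℂ × ℂ) × (ℂ × ℂ)) : (ℂ × ℂ) × (ℂ × ℂ) :=
  ((p.2.1 + (α - β) / (p.1.1 + p.2.2), p.2.2),
   (p.1.1, p.1.2 - (α - β) / (p.1.1 + p.2.2)))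

/-- Action on factors 1,2 of a triple. -/
noncomputable def kdvR12 (α β : ℂ) (t : (ℂ × ℂ) × (ℂ × ℂ) × (ℂ × ℂ)) :
    (ℂ × ℂ) × (ℂ × ℂ) × (ℂ × ℂ) :=
  ((KdVMap α β (t.1, t.2.1)).1, (KdVMap α β (t.1, t.2.1)).2, t.2.2)

/-- Action on factors 1,3. -/
noncomputable def kdvR13 (α γ : ℂ) (t : (ℂ × ℂ) × (ℂ × ℂ) × (ℂ × ℂ)) :
    (ℂ × ℂ) × (ℂ × ℂ) × (ℂ × ℂ) :=
  ((KdVMap α γ (t.1, t.2.2)).1, t.2.1, (KdVMap α γ (t.1, t.2.2)).2)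

/-- Action on factors 2,3. -/
noncomputable def kdvR23 (β γ : ℂ) (t : (ℂ × ℂ) × (ℂ × ℂ) × (ℂ × ℂ)) :
    (ℂ × ℂ) × (ℂ × ℂ) × (ℂ × ℂ) :=
  (t.1, (KdVMap β γ (t.2.1, t.2.2)).1, (KdVMap β γ (t.2.1, t.2.2)).2)

theorem stmt_13 (α β γ : ℂ) (t : (ℂ × ℂ) × (ℂ × ℂ) × (ℂ × ℂ))
    (hL1 : t.1.1 + t.2.1.2 ≠ 0)
    (hL2 : (kdvR12 α β t).1.1 + (kdvR12 α β t).2.2.2 ≠ 0)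
    (hL3 : (kdvR13 α γ (kdvR12 α β t)).2.1.1 + (kdvR13 α γ (kdvR12 α β t)).2.2.2 ≠ 0)
    (hR1 : t.2.1.1 + t.2.2.2 ≠ 0)
    (hR2 : (kdvR23 β γ t).1.1 + (kdvR23 β γ t).2.2.2 ≠ 0)
    (hR3 : (kdvR13 α γ (kdvR23 β γ t)).1.1 + (kdvR13 α γ (kdvR23 β γ t)).2.1.2 ≠ 0) :
    kdvR23 β γ (kdvR13 α γ (kdvR12 α β t)) = kdvR12 α β (kdvR13 α γ (kdvR23 β γ t)) := by
  obtain ⟨⟨x1, x2⟩, ⟨y1, y2⟩, ⟨z1, z2⟩⟩ := t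
  simp only [kdvR12, kdvR13, kdvR23, KdVMap] at *
  have ha : x1 + y2 ≠ 0 := hL1
  have hb : y1 + z2 ≠ 0 := hR1
  have e1 : y1 + (α - β) / (x1 + y2) + z2
      = ((x1 + y2) * (y1 + z2) + (α - β)) / (x1 + y2) := by field_simp; ring
  have hD : (x1 + y2) * (y1 + z2) + (α - β) ≠ 0 := by
    rw [e1, div_ne_zero_iff] at hL2; exact hL2.1
  have e3 : x1 + (y2 - (β - γ) / (y1 + z2))
      = ((x1 + y2) * (y1 + z2) + (γ - β)) / (y1 + z2) := by field_simp; ring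
  have hE : (x1 + y2) * (y1 + z2) + (γ - β) ≠ 0 := by
    rw [e3, div_ne_zero_iff] at hR2; exact hR2.1
  have e2 : x1 + (y2 - (α - γ) / (((x1 + y2) * (y1 + z2) + (α - β)) / (x1 + y2)))
      = (x1 + y2) * ((x1 + y2) * (y1 + z2) + (γ - β)) / ((x1 + y2) * (y1 + z2) + (α - β)) := by
    field_simp; ring
  have e4 : y1 + (α - γ) / (((x1 + y2) * (y1 + z2) + (γ - β)) / (y1 + z2)) + z2
      = (y1 + z2) * ((x1 + y2) * (y1 + z2) + (α - β)) / ((x1 + y2) * (y1 + z2) + (γ - β)) := by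
    field_simp; ring
  rw [e1, e3, e2, e4]
  have hae : (x1 + y2) * ((x1 + y2) * (y1 + z2) + (γ - β)) ≠ 0 := mul_ne_zero ha hE
  have hbd : (y1 + z2) * ((x1 + y2) * (y1 + z2) + (α - β)) ≠ 0 := mul_ne_zero hb hD
  simp only [Prod.mk.injEq]
  refine ⟨⟨?_, trivial⟩, ⟨?_, ?_⟩, trivial, ?_⟩ <;> field_simp <;> ring
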